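/- Let φ : X → Y be a mapping between Banach spaces and x̄ ∈ X. Suppose φ is Fréchet differentiable on a neighborhood of x̄ with derivative map x ↦ ∇φ(x) continuous at x̄, and the range ∇φ(x̄)(X) is nonmeager (of second Baire category) in Y. Then there exist μ, δ > 0 such that d(u, ∇φ(x)⁻¹(v)) ≤ μ‖∇φ(x)(u) − v‖ for all (x, u, v) ∈ B(x̄, δ) × X × Y. -/

import Mathlib

open Filter Metric Set Pointwise Topology
open scoped ENNReal

noncomputable section

/-- The Bouligand (contingent) tangent cone of `A` at `u`. -/
def bouligand {X : Type*} [NormedAddCommGroup X] [NormedSpace ℝ X] (A : Set X) (u : X) :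
    Set X :=
  {v | ∃ (vs : ℕ → X) (ts : ℕ → ℝ),
    Tendsto vs atTop (𝓝 v) ∧ Tendsto ts atTop (𝓝 0) ∧ (∀ n, 0 < ts n) ∧
    ∀ n, u + ts n • vs n ∈ A}

/-- The Shapiro first order contact property of `A` at `a`. -/
def shapiro {X : Type*} [NormedAddCommGroup X] [NormedSpace ℝ X] (A : Set X) (a : X) : Prop :=
  ∀ ε > 0, ∃ δ > 0, ∀ x ∈ A ∩ ball a δ, ∀ u ∈ A ∩ ball a δ,
    infDist (x - u) (bouligand A u) ≤ ε * ‖x - u‖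

/-- The lower Hadamard directional derivative of `φ` at `x` in direction `h`. -/
def hadamardDeriv {X : Type*} [NormedAddCommGroup X] [NormedSpace ℝ X]
    (φ : X → EReal) (x h : X) : EReal :=
  liminf (fun p : ℝ × X => (((1 : ℝ) / p.1 : ℝ) : EReal) * (φ (x + p.1 • p.2) - φ x))
    ((𝓝[>] (0 : ℝ)) ×ˢ 𝓝 h)

/-- The epigraph of an `EReal`-valued function, as a subset of `X × ℝ`. -/
def epigraph {X : Type*} (φ : X → EReal) : Set (X × ℝ) := {p | φ p.1 ≤ (p.2 : EReal)}

/-- The Hausdorff-Pompeiu excess of `C` beyond `D`. -/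
def excess {X : Type*} [PseudoEMetricSpace X] (C D : Set X) : ℝ≥0∞ :=
  ⨆ c ∈ C, EMetric.infEdist c D

/-- Metric regularity of `φ` around `xbar` (for `φ xbar`). -/
def metReg {X Y : Type*} [NormedAddCommGroup X] [NormedAddCommGroup Y]
    (φ : X → Y) (xbar : X) : Prop :=
  ∃ κ > (0 : ℝ), ∃ U ∈ 𝓝 xbar, ∃ V ∈ 𝓝 (φ xbar), ∀ x ∈ U, ∀ y ∈ V,
    EMetric.infEdist x (φ ⁻¹' {y}) ≤ ENNReal.ofReal (κ * ‖φ x - y‖)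
open Function Finset NNReal

theorem aux_approx {X Y : Type*} [NormedAddCommGroup X] [NormedSpace ℝ X]
    [NormedAddCommGroup Y] [NormedSpace ℝ Y] (f : X →L[ℝ] Y) (hnm : ¬ IsMeagre (Set.range f)) :
    ∃ C ≥ 0, ∀ y, ∃ x, dist (f x) y ≤ 1 / 2 * ‖y‖ ∧ ‖x‖ ≤ C * ‖y‖ := by
  have hsub : Set.range f ⊆ ⋃ n : ℕ, closure (f '' ball 0 n) := by
    rintro y ⟨x, rfl⟩
    rcases exists_nat_gt ‖x‖ with ⟨n, hn⟩
    refine mem_iUnion.2 ⟨n, subset_closure ?_⟩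
    exact ⟨x, by rwa [mem_ball, dist_eq_norm, sub_zero], rfl⟩
  have : ∃ (n : ℕ) (x : Y), x ∈ interior (closure (f '' ball 0 n)) := by
    by_contra h
    push_neg at h
    apply hnm
    refine IsMeagre.mono hsub (isMeagre_iUnion fun n => ?_)
    refine isMeagre_iff_countable_union_isNowhereDense.mpr
      ⟨{closure (f '' ball 0 n)}, ?_, countable_singleton _, ?_⟩
    · rintro t rfl
      rw [IsNowhereDense, closure_closure]
      exact eq_empty_iff_forall_notMem.2 fun x hx => h n x hx
    · simp
  simp only [mem_interior_iff_mem_nhds, Metric.mem_nhds_iff] at this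
  rcases this with ⟨n, a, ε, ⟨εpos, H⟩⟩
  have hc : (1 : ℝ) < ‖(2 : ℝ)‖ := by norm_num
  refine ⟨(ε / 2)⁻¹ * ‖(2 : ℝ)‖ * 2 * n, by positivity, fun y => ?_⟩
  rcases eq_or_ne y 0 with rfl | hy
  · use 0; simp
  · rcases rescale_to_shell hc (half_pos εpos) hy with ⟨d, hd, ydlt, -, dinv⟩
    let δ := ‖d‖ * ‖y‖ / 4
    have δpos : 0 < δ := div_pos (mul_pos (norm_pos_iff.2 hd) (norm_pos_iff.2 hy)) (by norm_num)
    have h1 : a + d • y ∈ ball a ε := by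
      simp [dist_eq_norm, lt_of_le_of_lt ydlt.le (half_lt_self εpos)]
    rcases Metric.mem_closure_iff.1 (H h1) _ δpos with ⟨z₁, z₁im, h₁⟩
    rcases (mem_image _ _ _).1 z₁im with ⟨x₁, hx₁, xz₁⟩
    rw [← xz₁] at h₁
    rw [mem_ball, dist_eq_norm, sub_zero] at hx₁
    have h2 : a ∈ ball a ε := by simp [εpos]
    rcases Metric.mem_closure_iff.1 (H h2) _ δpos with ⟨z₂, z₂im, h₂⟩
    rcases (mem_image _ _ _).1 z₂im with ⟨x₂, hx₂, xz₂⟩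
    rw [← xz₂] at h₂
    rw [mem_ball, dist_eq_norm, sub_zero] at hx₂
    let x := x₁ - x₂
    have I : ‖f x - d • y‖ ≤ 2 * δ :=
      calc
        ‖f x - d • y‖ = ‖f x₁ - (a + d • y) - (f x₂ - a)‖ := by
          congr 1
          simp only [x, f.map_sub]
          abel
        _ ≤ ‖f x₁ - (a + d • y)‖ + ‖f x₂ - a‖ := norm_sub_le _ _
        _ ≤ δ + δ := by rw [dist_eq_norm'] at h₁ h₂; gcongr
        _ = 2 * δ := (two_mul _).symm
    have J : ‖f (d⁻¹ • x) - y‖ ≤ 1 / 2 * ‖y‖ :=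
      calc
        ‖f (d⁻¹ • x) - y‖ = ‖d⁻¹ • f x - (d⁻¹ * d) • y‖ := by
          rw [f.map_smul, inv_mul_cancel₀ hd, one_smul]
        _ = ‖d⁻¹ • (f x - d • y)‖ := by rw [mul_smul, smul_sub]
        _ = ‖d‖⁻¹ * ‖f x - d • y‖ := by rw [norm_smul, norm_inv]
        _ ≤ ‖d‖⁻¹ * (2 * δ) := by gcongr
        _ = ‖d‖⁻¹ * ‖d‖ * ‖y‖ / 2 := by simp only [δ]; ring
        _ = ‖y‖ / 2 := by
          rw [inv_mul_cancel₀, one_mul]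
          simp [norm_eq_zero, hd]
        _ = 1 / 2 * ‖y‖ := by ring
    rw [← dist_eq_norm] at J
    have K : ‖d⁻¹ • x‖ ≤ (ε / 2)⁻¹ * ‖(2 : ℝ)‖ * 2 * ↑n * ‖y‖ :=
      calc
        ‖d⁻¹ • x‖ = ‖d‖⁻¹ * ‖x₁ - x₂‖ := by rw [norm_smul, norm_inv]
        _ ≤ (ε / 2)⁻¹ * ‖(2 : ℝ)‖ * ‖y‖ * (n + n) := by
          gcongr
          · exact le_trans (norm_sub_le _ _) (by gcongr)
        _ = (ε / 2)⁻¹ * ‖(2 : ℝ)‖ * 2 * ↑n * ‖y‖ := by ring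
    exact ⟨d⁻¹ • x, J, K⟩

theorem aux_iter {X Y : Type*} [NormedAddCommGroup X] [NormedSpace ℝ X] [CompleteSpace X]
    [NormedAddCommGroup Y] [NormedSpace ℝ Y] (f : X →L[ℝ] Y) {C : ℝ} (C0 : 0 ≤ C)
    (hC : ∀ y, ∃ x, dist (f x) y ≤ 1 / 2 * ‖y‖ ∧ ‖x‖ ≤ C * ‖y‖) :
    ∀ y, ∃ x, f x = y ∧ ‖x‖ ≤ (2 * C + 1) * ‖y‖ := by
  choose g hg using hC
  let h y := y - f (g y)
  have hle : ∀ y, ‖h y‖ ≤ 1 / 2 * ‖y‖ := by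
    intro y
    rw [← dist_eq_norm, dist_comm]
    exact (hg y).1
  intro y
  have hnle : ∀ n : ℕ, ‖h^[n] y‖ ≤ (1 / 2) ^ n * ‖y‖ := by
    intro n
    induction n with
    | zero => simp only [one_div, one_mul, iterate_zero_apply, pow_zero, le_rfl]
    | succ n IH =>
      rw [iterate_succ']
      apply le_trans (hle _) _
      rw [pow_succ', mul_assoc]
      gcongr
  let u n := g (h^[n] y)
  have ule : ∀ n, ‖u n‖ ≤ (1 / 2) ^ n * (C * ‖y‖) := fun n ↦ by
    apply le_trans (hg _).2
    calc
      C * ‖h^[n] y‖ ≤ C * ((1 / 2) ^ n * ‖y‖) := mul_le_mul_of_nonneg_left (hnle n) C0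
      _ = (1 / 2) ^ n * (C * ‖y‖) := by ring
  have sNu : Summable fun n => ‖u n‖ := by
    refine .of_nonneg_of_le (fun n => norm_nonneg _) ule ?_
    exact Summable.mul_right _ (summable_geometric_of_lt_one (by norm_num) (by norm_num))
  have su : Summable u := sNu.of_norm
  let x := tsum u
  have x_ineq : ‖x‖ ≤ (2 * C + 1) * ‖y‖ :=
    calc
      ‖x‖ ≤ ∑' n, ‖u n‖ := norm_tsum_le_tsum_norm sNu
      _ ≤ ∑' n, (1 / 2) ^ n * (C * ‖y‖) :=
        Summable.tsum_le_tsum ule sNu (Summable.mul_right _ summable_geometric_two)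
      _ = (∑' n, (1 / 2) ^ n) * (C * ‖y‖) := tsum_mul_right
      _ = 2 * C * ‖y‖ := by rw [tsum_geometric_two, mul_assoc]
      _ ≤ 2 * C * ‖y‖ + ‖y‖ := le_add_of_nonneg_right (norm_nonneg y)
      _ = (2 * C + 1) * ‖y‖ := by ring
  have fsumeq : ∀ n : ℕ, f (∑ i ∈ Finset.range n, u i) = y - h^[n] y := by
    intro n
    induction n with
    | zero => simp [f.map_zero]
    | succ n IH => rw [sum_range_succ, f.map_add, IH, iterate_succ_apply', sub_add]
  have : Tendsto (fun n => ∑ i ∈ Finset.range n, u i) atTop (𝓝 x) := su.hasSum.tendsto_sum_nat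
  have L₁ : Tendsto (fun n => f (∑ i ∈ Finset.range n, u i)) atTop (𝓝 (f x)) :=
    (f.continuous.tendsto _).comp this
  simp only [fsumeq] at L₁
  have L₂ : Tendsto (fun n => y - h^[n] y) atTop (𝓝 (y - 0)) := by
    refine tendsto_const_nhds.sub ?_
    rw [tendsto_iff_norm_sub_tendsto_zero]
    simp only [sub_zero]
    refine squeeze_zero (fun _ => norm_nonneg _) hnle ?_
    rw [← zero_mul ‖y‖]
    refine (_root_.tendsto_pow_atTop_nhds_zero_of_lt_one ?_ ?_).mul tendsto_const_nhds <;> norm_num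
  have feq : f x = y - 0 := tendsto_nhds_unique L₁ L₂
  rw [sub_zero] at feq
  exact ⟨x, feq, x_ineq⟩

theorem uniform_linear_metric_estimate_of_nonmeager_range {X Y : Type*}
    [NormedAddCommGroup X] [NormedSpace ℝ X] [CompleteSpace X]
    [NormedAddCommGroup Y] [NormedSpace ℝ Y] [CompleteSpace Y]
    (φ : X → Y) (xbar : X) (D : X → X →L[ℝ] Y)
    (hdiff : ∀ᶠ x in 𝓝 xbar, HasFDerivAt φ (D x) x)
    (hcont : ContinuousAt D xbar)
    (hnm : ¬ IsMeagre (Set.range (D xbar))) :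
    ∃ μ > (0 : ℝ), ∃ δ > (0 : ℝ), ∀ x ∈ ball xbar δ, ∀ (u : X) (v : Y),
      EMetric.infEdist u (⇑(D x) ⁻¹' {v}) ≤ ENNReal.ofReal (μ * ‖D x u - v‖) := by
  obtain ⟨C, C0, hC⟩ := aux_approx (D xbar) hnm
  have key := aux_iter (D xbar) C0 hC
  set C1 : ℝ := 2 * C + 1 with hC1
  have C1pos : 0 < C1 := by positivity
  have εpos : 0 < 1 / (2 * C1) := by positivity
  have hev : ∀ᶠ x in 𝓝 xbar, ‖D x - D xbar‖ < 1 / (2 * C1) := by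
    have := hcont.tendsto.eventually (Metric.ball_mem_nhds (D xbar) εpos)
    filter_upwards [this] with x hx
    rwa [dist_eq_norm] at hx
  obtain ⟨δ, δpos, hδ⟩ := Metric.eventually_nhds_iff_ball.1 hev
  refine ⟨2 * C1 + 1, by positivity, δ, δpos, fun x hx u v => ?_⟩
  have happrox : ∀ y : Y, ∃ w, dist (D x w) y ≤ 1 / 2 * ‖y‖ ∧ ‖w‖ ≤ C1 * ‖y‖ := by
    intro y
    obtain ⟨w, hw1, hw2⟩ := key y
    refine ⟨w, ?_, hw2⟩
    have heq : dist (D x w) y = ‖(D x - D xbar) w‖ := by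
      rw [dist_eq_norm]; simp [hw1]
    rw [heq]
    calc ‖(D x - D xbar) w‖ ≤ ‖D x - D xbar‖ * ‖w‖ := (D x - D xbar).le_opNorm w
      _ ≤ (1 / (2 * C1)) * (C1 * ‖y‖) := by
          apply mul_le_mul (hδ x hx).le hw2 (norm_nonneg _) εpos.le
      _ = 1 / 2 * ‖y‖ := by field_simp
  obtain ⟨w, hw1, hw2⟩ := aux_iter (D x) C1pos.le happrox (D x u - v)
  have hmem : u - w ∈ ⇑(D x) ⁻¹' {v} := by
    simp only [Set.mem_preimage, Set.mem_singleton_iff, map_sub, hw1]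
    abel
  calc EMetric.infEdist u (⇑(D x) ⁻¹' {v}) ≤ edist u (u - w) :=
        EMetric.infEdist_le_edist_of_mem hmem
    _ = ENNReal.ofReal ‖w‖ := by
        rw [edist_dist, dist_eq_norm]
        congr 1
        simp
    _ ≤ ENNReal.ofReal ((2 * C1 + 1) * ‖D x u - v‖) := ENNReal.ofReal_le_ofReal hw2
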